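/- Let A and B be finite linearly ordered alphabets, and order their disjoint union A ⊕ B so that every element of A is smaller than every element of B. Let π : ℚ⟨A ⊕ B⟩ → ℚ⟨A⟩ ⊗_ℚ ℚ⟨B⟩ be the algebra homomorphism determined by π(a) = a ⊗ 1 for a ∈ A and π(b) = 1 ⊗ b for b ∈ B. Then for every σ ∈ Sₙ, π(F_σ(A ⊕ B)) = Σ_{k=0}^{n} F_{Std(σ(1)⋯σ(k))}(A) ⊗ F_{Std(σ(k+1)⋯σ(n))}(B), where the standardizations of the prefix and suffix of the one-line word of σ are permutations in S_k and S_{n−k}, and F of the empty permutation is 1. (This is the coproduct formula Δ F_σ = Σ_{u·v=σ} F_{Std(u)} ⊗ F_{Std(v)} of the bialgebra FQSym.) -/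

import Mathlib

open scoped Classical

noncomputable section

def IsStd {A : Type*} [LinearOrder A] {n : ℕ} (w : Fin n → A) (σ : Equiv.Perm (Fin n)) : Prop :=
  ∀ i j : Fin n, i < j → (σ i < σ j ↔ w i ≤ w j)

theorem exists_isStd {A : Type*} [LinearOrder A] {n : ℕ} (w : Fin n → A) :
    ∃ σ : Equiv.Perm (Fin n), IsStd w σ := by
  refine ⟨(Tuple.sort w)⁻¹, ?_⟩
  have hmono : Monotone (w ∘ (Tuple.sort w)) := Tuple.monotone_sort w
  have hstab : ∀ i j, i < j → w (Tuple.sort w i) = w (Tuple.sort w j) →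
      Tuple.sort w i < Tuple.sort w j :=
    (Tuple.eq_sort_iff.1 rfl).2
  intro i j hij
  constructor
  · intro h
    have := hmono h.le
    simpa using this
  · intro hw
    rcases lt_trichotomy ((Tuple.sort w)⁻¹ i) ((Tuple.sort w)⁻¹ j) with h | h | h
    · exact h
    · exact absurd (congrArg (Tuple.sort w) h) (by simp [hij.ne])
    · exfalso
      have h1 : w j ≤ w i := by simpa using hmono h.le
      have h2 : w j = w i := le_antisymm h1 hw
      have := hstab _ _ h (by simpa using h2)
      simp at this
      exact absurd this (not_lt.2 hij.le)

/-- The standardization of a word, defined via unique choice from `IsStd`. -/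
def std {A : Type*} [LinearOrder A] {n : ℕ} (w : Fin n → A) : Equiv.Perm (Fin n) :=
  Classical.choose (exists_isStd w)


lemma std_isStd {A : Type*} [LinearOrder A] {n : ℕ} (w : Fin n → A) : IsStd w (std w) :=
  Classical.choose_spec (exists_isStd w)

lemma IsStd.compare {A : Type*} [LinearOrder A] {n : ℕ} {w : Fin n → A}
    {σ : Equiv.Perm (Fin n)} (h : IsStd w σ) {i j : Fin n} (hij : i ≠ j) :
    (σ i < σ j ↔ (if i < j then w i ≤ w j else ¬ (w j ≤ w i))) := by
  rcases lt_or_gt_of_ne hij with hlt | hgt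
  · simp [hlt, h i j hlt]
  · have := h j i hgt
    rw [if_neg (not_lt.2 hgt.le)]
    constructor
    · intro h1 h2
      exact absurd (this.2 h2) (not_lt.2 h1.le)
    · intro h1
      rcases lt_trichotomy (σ i) (σ j) with h2 | h2 | h2
      · exact h2
      · exact absurd (σ.injective h2) hij
      · exact absurd (this.1 h2) h1

lemma isStd_unique {A : Type*} [LinearOrder A] {n : ℕ} {w : Fin n → A}
    {σ τ : Equiv.Perm (Fin n)} (hσ : IsStd w σ) (hτ : IsStd w τ) : σ = τ := by
  have key : StrictMono (fun a => τ (σ.symm a)) := by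
    intro a b hab
    have hne : σ.symm a ≠ σ.symm b := fun h => hab.ne (by simpa using congrArg σ h)
    have h1 := hσ.compare hne
    have h2 := hτ.compare hne
    have : σ (σ.symm a) < σ (σ.symm b) := by simpa using hab
    exact h2.2 (h1.1 this)
  have key2 : StrictMono (fun a : Fin n => a) := strictMono_id
  have hr : Set.range (fun a => τ (σ.symm a)) = Set.range (fun a : Fin n => a) := by
    rw [Set.range_eq_univ.2, Set.range_eq_univ.2 (fun a => ⟨a, rfl⟩)]
    intro a
    exact ⟨σ (τ.symm a), by simp⟩
  have := (StrictMono.range_inj key key2).1 hr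
  ext x
  have h := congrFun this (σ x)
  simp only [Equiv.symm_apply_apply] at h
  exact congrArg Fin.val h.symm

lemma std_eq_iff {A : Type*} [LinearOrder A] {n : ℕ} {w : Fin n → A} {σ : Equiv.Perm (Fin n)} :
    std w = σ ↔ IsStd w σ :=
  ⟨fun h => h ▸ std_isStd w, fun h => isStd_unique (std_isStd w) h⟩


/-- A word `w : Fin n → A` viewed as an element of `ℚ⟨A⟩`. -/
def wordAlg {A : Type*} {n : ℕ} (w : Fin n → A) : MonoidAlgebra ℚ (FreeMonoid A) :=
  MonoidAlgebra.of ℚ (FreeMonoid A) (FreeMonoid.ofList (List.ofFn w))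

/-- The free quasi-ribbon `F_σ(A) = Σ_{w : Std(w) = σ⁻¹} w ∈ ℚ⟨A⟩`. -/
def FQR (A : Type*) [LinearOrder A] [Fintype A] {n : ℕ} (σ : Equiv.Perm (Fin n)) :
    MonoidAlgebra ℚ (FreeMonoid A) :=
  ∑ w ∈ Finset.univ.filter (fun w : Fin n → A => std w = σ⁻¹), wordAlg w

/-- The algebra homomorphism `π : ℚ⟨A ⊕ B⟩ → ℚ⟨A⟩ ⊗ ℚ⟨B⟩` determined by
`a ↦ a ⊗ 1` for `a ∈ A` and `b ↦ 1 ⊗ b` for `b ∈ B`. -/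
def piHom (A B : Type*) [LinearOrder A] [LinearOrder B] :
    MonoidAlgebra ℚ (FreeMonoid (A ⊕ₗ B)) →ₐ[ℚ]
      (TensorProduct ℚ (MonoidAlgebra ℚ (FreeMonoid A)) (MonoidAlgebra ℚ (FreeMonoid B))) :=
  MonoidAlgebra.lift ℚ _ (FreeMonoid (A ⊕ₗ B))
    (FreeMonoid.lift fun x =>
      Sum.elim
        (fun a => (MonoidAlgebra.of ℚ (FreeMonoid A) (FreeMonoid.of a)) ⊗ₜ[ℚ] 1)
        (fun b => 1 ⊗ₜ[ℚ] (MonoidAlgebra.of ℚ (FreeMonoid B) (FreeMonoid.of b)))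
        (ofLex x))


def wordAlgL {A : Type*} (l : List A) : MonoidAlgebra ℚ (FreeMonoid A) :=
  MonoidAlgebra.of ℚ (FreeMonoid A) (FreeMonoid.ofList l)

lemma wordAlg_eq_wordAlgL {A : Type*} {n : ℕ} (w : Fin n → A) :
    wordAlg w = wordAlgL (List.ofFn w) := rfl

lemma wordAlgL_nil {A : Type*} : wordAlgL ([] : List A) = 1 := rfl

lemma wordAlgL_cons {A : Type*} (x : A) (l : List A) :
    wordAlgL (x :: l) = wordAlgL [x] * wordAlgL l := by
  unfold wordAlgL
  rw [← map_mul]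
  rfl

lemma piHom_single (A B : Type*) [LinearOrder A] [LinearOrder B] (x : A ⊕ₗ B) :
    piHom A B (wordAlgL [x]) =
      Sum.elim
        (fun a => (wordAlgL [a]) ⊗ₜ[ℚ] (1 : MonoidAlgebra ℚ (FreeMonoid B)))
        (fun b => (1 : MonoidAlgebra ℚ (FreeMonoid A)) ⊗ₜ[ℚ] (wordAlgL [b]))
        (ofLex x) := by
  have : wordAlgL [x] = MonoidAlgebra.of ℚ (FreeMonoid (A ⊕ₗ B)) (FreeMonoid.of x) := rfl
  rw [this]
  unfold piHom
  rw [MonoidAlgebra.lift_of, FreeMonoid.lift_eval_of]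
  rcases h : ofLex x with a | b <;> simp [h] <;> rfl

lemma piHom_wordAlgL (A B : Type*) [LinearOrder A] [LinearOrder B] (l : List (A ⊕ₗ B)) :
    piHom A B (wordAlgL l) =
      (wordAlgL (l.filterMap fun x => (ofLex x).getLeft?)) ⊗ₜ[ℚ]
      (wordAlgL (l.filterMap fun x => (ofLex x).getRight?)) := by
  induction l with
  | nil => simp [wordAlgL_nil, Algebra.TensorProduct.one_def]
  | cons x l ih =>
    rw [wordAlgL_cons, map_mul, ih, piHom_single]
    rcases h : ofLex x with a | b
    · simp only [Sum.elim_inl, List.filterMap_cons, h, Sum.getLeft?, Sum.getRight?,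
        Algebra.TensorProduct.tmul_mul_tmul, one_mul, ← wordAlgL_cons]
    · simp only [Sum.elim_inr, List.filterMap_cons, h, Sum.getLeft?, Sum.getRight?,
        Algebra.TensorProduct.tmul_mul_tmul, one_mul, ← wordAlgL_cons]


lemma sort_filter_univ {n : ℕ} (p : Fin n → Prop) [DecidablePred p] :
    (Finset.univ.filter p).sort (· ≤ ·) = (List.finRange n).filter (fun i => decide (p i)) := by
  refine List.Perm.eq_of_pairwise' (r := (· ≤ ·)) ?_ ?_ ?_
  rotate_right
  · apply List.perm_of_nodup_nodup_toFinset_eq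
    · exact Finset.sort_nodup _ _
    · exact (List.nodup_finRange n).filter _
    · rw [Finset.sort_toFinset]
      ext x
      simp
  · exact Finset.pairwise_sort _ _
  · exact List.Pairwise.imp le_of_lt
      (List.Pairwise.sublist List.filter_sublist (List.pairwise_lt_finRange n))

lemma ofFn_orderEmbOfFin {α : Type*} [LinearOrder α] (s : Finset α) {m : ℕ} (hs : s.card = m) :
    List.ofFn (fun c : Fin m => s.orderEmbOfFin hs c) = s.sort (· ≤ ·) := by
  apply List.ext_getElem
  · simp [Finset.length_sort, hs]
  · intro i h1 h2
    simp only [List.getElem_ofFn]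
    rw [Finset.orderEmbOfFin_apply]
    rfl

lemma subword_ofFn {C β : Type*} {n : ℕ}
    (w : Fin n → C) (G : C → Option β) (emb : β → C)
    (hinj : Function.Injective emb)
    (hGe : ∀ c, (G c).map emb = if (G c).isSome then some c else none)
    {m : ℕ} (s : Finset (Fin n)) (hs : s.card = m)
    (hmem : ∀ i, i ∈ s ↔ (G (w i)).isSome)
    (u : Fin m → β) (hu : ∀ c, emb (u c) = w (s.orderEmbOfFin hs c)) :
    (List.ofFn w).filterMap G = List.ofFn u := by
  apply List.map_injective_iff.2 hinj
  have h1 : ((List.ofFn w).filterMap G).map emb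
      = (List.ofFn w).filter (fun c => (G c).isSome) := by
    rw [List.map_filterMap]
    have : ∀ c, (G c).map emb = Option.guard (fun c => (G c).isSome) c := by
      intro c
      rw [hGe c, Option.guard]
    simp only [this]
    exact congrFun List.filterMap_eq_filter _
  rw [h1]
  have h2 : (List.ofFn u).map emb = List.ofFn (fun c => w (s.orderEmbOfFin hs c)) := by
    rw [List.map_ofFn]
    exact congrArg List.ofFn (funext fun c => hu c)
  rw [h2]
  have h3 : List.ofFn (fun c => w (s.orderEmbOfFin hs c))
      = (s.sort (· ≤ ·)).map w := by
    rw [← ofFn_orderEmbOfFin s hs, List.map_ofFn]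
    rfl
  have h4 : s = Finset.univ.filter (fun i => (G (w i)).isSome) := by
    ext i; simp [hmem i]
  rw [h3, h4, sort_filter_univ]
  rw [List.ofFn_eq_map, List.filter_map]
  congr 1
  apply List.filter_congr
  intro i _
  simp


section Core
variable {A B : Type*} [LinearOrder A] [LinearOrder B] {n : ℕ}

def leftSet (w : Fin n → A ⊕ₗ B) : Finset (Fin n) :=
  Finset.univ.filter fun i => (ofLex (w i)).isLeft

def kOf (w : Fin n → A ⊕ₗ B) : ℕ := (leftSet w).card

lemma kOf_le (w : Fin n → A ⊕ₗ B) : kOf w ≤ n :=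
  le_trans (Finset.card_filter_le _ _) (by simp)

def Pk (σ : Equiv.Perm (Fin n)) (k : ℕ) : Finset (Fin n) :=
  Finset.univ.filter fun i => ((σ⁻¹ i : Fin n) : ℕ) < k

lemma mem_Pk {σ : Equiv.Perm (Fin n)} {k : ℕ} {i : Fin n} :
    i ∈ Pk σ k ↔ ((σ⁻¹ i : Fin n) : ℕ) < k := by simp [Pk]

lemma card_val_lt {n k : ℕ} (hk : k ≤ n) :
    (Finset.univ.filter fun i : Fin n => (i : ℕ) < k).card = k := by
  rw [← Finset.card_range k]
  apply Finset.card_nbij (i := Fin.val)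
  · intro a ha; simp at ha ⊢; exact ha
  · exact Fin.val_injective.injOn
  · intro b hb
    simp only [Finset.coe_range, Set.mem_Iio] at hb
    exact ⟨⟨b, lt_of_lt_of_le hb hk⟩, by simpa using hb, rfl⟩

lemma card_Pk (σ : Equiv.Perm (Fin n)) {k : ℕ} (hk : k ≤ n) : (Pk σ k).card = k := by
  have h : Pk σ k = (Finset.univ.filter fun j : Fin n => (j : ℕ) < k).image σ := by
    ext i
    simp only [mem_Pk, Finset.mem_image, Finset.mem_filter, Finset.mem_univ, true_and]
    constructor
    · intro h; exact ⟨σ⁻¹ i, h, by simp⟩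
    · rintro ⟨j, hj, rfl⟩; simpa using hj
  rw [h, Finset.card_image_of_injective _ σ.injective, card_val_lt hk]

def Qk (σ : Equiv.Perm (Fin n)) (k : ℕ) : Finset (Fin n) :=
  Finset.univ.filter fun i => ¬ ((σ⁻¹ i : Fin n) : ℕ) < k

lemma mem_Qk {σ : Equiv.Perm (Fin n)} {k : ℕ} {i : Fin n} :
    i ∈ Qk σ k ↔ ¬ ((σ⁻¹ i : Fin n) : ℕ) < k := by simp [Qk]

lemma card_Qk (σ : Equiv.Perm (Fin n)) {k : ℕ} (hk : k ≤ n) : (Qk σ k).card = n - k := by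
  have h := Finset.card_filter_add_card_filter_not
    (s := (Finset.univ : Finset (Fin n))) (p := fun i => ((σ⁻¹ i : Fin n) : ℕ) < k)
  rw [show (Finset.univ : Finset (Fin n)).card = n by simp] at h
  have h2 := card_Pk σ hk
  unfold Pk at h2
  unfold Qk
  omega

def qE (σ : Equiv.Perm (Fin n)) {k : ℕ} (hk : k ≤ n) : Fin k ↪o Fin n :=
  (Pk σ k).orderEmbOfFin (card_Pk σ hk)

def qI (σ : Equiv.Perm (Fin n)) {k : ℕ} (hk : k ≤ n) : Fin k ≃o (Pk σ k) :=
  (Pk σ k).orderIsoOfFin (card_Pk σ hk)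

lemma qI_coe (σ : Equiv.Perm (Fin n)) {k : ℕ} (hk : k ≤ n) (c : Fin k) :
    ((qI σ hk c : Fin n)) = qE σ hk c := Finset.coe_orderIsoOfFin_apply _ _ _

lemma qE_mem (σ : Equiv.Perm (Fin n)) {k : ℕ} (hk : k ≤ n) (c : Fin k) :
    qE σ hk c ∈ Pk σ k := Finset.orderEmbOfFin_mem _ _ _

def rE (σ : Equiv.Perm (Fin n)) {k : ℕ} (hk : k ≤ n) : Fin (n - k) ↪o Fin n :=
  (Qk σ k).orderEmbOfFin (card_Qk σ hk)

def rI (σ : Equiv.Perm (Fin n)) {k : ℕ} (hk : k ≤ n) : Fin (n - k) ≃o (Qk σ k) :=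
  (Qk σ k).orderIsoOfFin (card_Qk σ hk)

lemma rI_coe (σ : Equiv.Perm (Fin n)) {k : ℕ} (hk : k ≤ n) (c : Fin (n - k)) :
    ((rI σ hk c : Fin n)) = rE σ hk c := Finset.coe_orderIsoOfFin_apply _ _ _

lemma rE_mem (σ : Equiv.Perm (Fin n)) {k : ℕ} (hk : k ≤ n) (c : Fin (n - k)) :
    rE σ hk c ∈ Qk σ k := Finset.orderEmbOfFin_mem _ _ _

/-- The equivalence `Pk σ k ≃ Fin k` sending `x` to `σ⁻¹ x`. -/
def PkEquiv (σ : Equiv.Perm (Fin n)) {k : ℕ} (hk : k ≤ n) : (Pk σ k : Finset (Fin n)) ≃ Fin k where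
  toFun x := ⟨((σ⁻¹ (x : Fin n) : Fin n) : ℕ), mem_Pk.1 x.2⟩
  invFun a := ⟨σ ⟨(a : ℕ), lt_of_lt_of_le a.2 hk⟩, mem_Pk.2 (by simpa using a.2)⟩
  left_inv x := Subtype.ext (by simp)
  right_inv a := Fin.ext (by simp)

def EP (σ : Equiv.Perm (Fin n)) {k : ℕ} (hk : k ≤ n) : Equiv.Perm (Fin k) :=
  (qI σ hk).toEquiv.trans (PkEquiv σ hk)

lemma EP_val (σ : Equiv.Perm (Fin n)) {k : ℕ} (hk : k ≤ n) (c : Fin k) :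
    ((EP σ hk c : Fin k) : ℕ) = ((σ⁻¹ (qE σ hk c) : Fin n) : ℕ) := by
  show ((σ⁻¹ ((qI σ hk c : Fin n)) : Fin n) : ℕ) = _
  rw [qI_coe]

lemma EP_symm_apply (σ : Equiv.Perm (Fin n)) {k : ℕ} (hk : k ≤ n) (a : Fin k) :
    (EP σ hk).symm a
      = (qI σ hk).symm ⟨σ ⟨(a : ℕ), lt_of_lt_of_le a.2 hk⟩, mem_Pk.2 (by simpa using a.2)⟩ := rfl

lemma EP_lt_iff (σ : Equiv.Perm (Fin n)) {k : ℕ} (hk : k ≤ n) (c d : Fin k) :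
    EP σ hk c < EP σ hk d ↔ σ⁻¹ (qE σ hk c) < σ⁻¹ (qE σ hk d) := by
  rw [Fin.lt_def, EP_val, EP_val, Fin.lt_def]

def QkEquiv (σ : Equiv.Perm (Fin n)) {k : ℕ} (hk : k ≤ n) :
    (Qk σ k : Finset (Fin n)) ≃ Fin (n - k) where
  toFun x := ⟨((σ⁻¹ (x : Fin n) : Fin n) : ℕ) - k, by
    have h1 := mem_Qk.1 x.2
    have h2 := (σ⁻¹ (x : Fin n)).2
    omega⟩
  invFun a := ⟨σ ⟨k + (a : ℕ), by have := a.2; omega⟩, mem_Qk.2 (by simp)⟩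
  left_inv x := Subtype.ext (by
    have h1 := mem_Qk.1 x.2
    have h3 : k + (((σ⁻¹ (x : Fin n) : Fin n) : ℕ) - k) = ((σ⁻¹ (x : Fin n) : Fin n) : ℕ) := by
      omega
    simp only [h3]
    simp)
  right_inv a := Fin.ext (by simp)

def FP (σ : Equiv.Perm (Fin n)) {k : ℕ} (hk : k ≤ n) : Equiv.Perm (Fin (n - k)) :=
  (rI σ hk).toEquiv.trans (QkEquiv σ hk)

lemma FP_val (σ : Equiv.Perm (Fin n)) {k : ℕ} (hk : k ≤ n) (c : Fin (n - k)) :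
    ((FP σ hk c : Fin (n - k)) : ℕ) = ((σ⁻¹ (rE σ hk c) : Fin n) : ℕ) - k := by
  show ((σ⁻¹ ((rI σ hk c : Fin n)) : Fin n) : ℕ) - k = _
  rw [rI_coe]

lemma FP_symm_apply (σ : Equiv.Perm (Fin n)) {k : ℕ} (hk : k ≤ n) (a : Fin (n - k)) :
    (FP σ hk).symm a
      = (rI σ hk).symm ⟨σ ⟨k + (a : ℕ), by have := a.2; omega⟩, mem_Qk.2 (by simp)⟩ := rfl

lemma FP_lt_iff (σ : Equiv.Perm (Fin n)) {k : ℕ} (hk : k ≤ n) (c d : Fin (n - k)) :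
    FP σ hk c < FP σ hk d ↔ σ⁻¹ (rE σ hk c) < σ⁻¹ (rE σ hk d) := by
  rw [Fin.lt_def, FP_val, FP_val, Fin.lt_def]
  have h1 := mem_Qk.1 (rE_mem σ hk c)
  have h2 := mem_Qk.1 (rE_mem σ hk d)
  omega


lemma isStd_prefix (σ : Equiv.Perm (Fin n)) {k : ℕ} (hk : k ≤ n) :
    IsStd (fun a : Fin k => σ ⟨(a : ℕ), lt_of_lt_of_le a.2 hk⟩) (EP σ hk).symm := by
  intro a b hab
  rw [EP_symm_apply, EP_symm_apply]
  rw [(qI σ hk).symm.lt_iff_lt, Subtype.mk_lt_mk]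
  constructor
  · exact le_of_lt
  · intro h
    exact lt_of_le_of_ne h (fun hc => (Fin.ne_of_lt hab)
      (Fin.ext (by simpa using congrArg Fin.val (σ.injective hc))))

lemma stdPrefix (σ : Equiv.Perm (Fin n)) {k : ℕ} (hk : k ≤ n) :
    (std (fun a : Fin k => σ ⟨(a : ℕ), lt_of_lt_of_le a.2 hk⟩))⁻¹ = EP σ hk := by
  rw [std_eq_iff.2 (isStd_prefix σ hk)]
  rfl

lemma isStd_suffix (σ : Equiv.Perm (Fin n)) {k : ℕ} (hk : k ≤ n) :
    IsStd (fun a : Fin (n - k) => σ ⟨k + (a : ℕ), by have := a.2; omega⟩) (FP σ hk).symm := by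
  intro a b hab
  rw [FP_symm_apply, FP_symm_apply]
  rw [(rI σ hk).symm.lt_iff_lt, Subtype.mk_lt_mk]
  constructor
  · exact le_of_lt
  · intro h
    refine lt_of_le_of_ne h (fun hc => (Fin.ne_of_lt hab) ?_)
    have := σ.injective hc
    rw [Fin.mk.injEq] at this
    exact Fin.ext (by omega)

lemma stdSuffix (σ : Equiv.Perm (Fin n)) {k : ℕ} (hk : k ≤ n) :
    (std (fun a : Fin (n - k) => σ ⟨k + (a : ℕ), by have := a.2; omega⟩))⁻¹ = FP σ hk := by
  rw [std_eq_iff.2 (isStd_suffix σ hk)]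
  rfl

lemma mem_iff_lt_card (S : Finset (Fin n)) (hS : ∀ x ∈ S, ∀ y, y ∉ S → x < y) (x : Fin n) :
    x ∈ S ↔ (x : ℕ) < S.card := by
  constructor
  · intro hx
    have hsub : (Finset.univ.filter fun y : Fin n => (y : ℕ) < (x : ℕ) + 1) ⊆ S := by
      intro y hy
      simp only [Finset.mem_filter, Finset.mem_univ, true_and] at hy
      by_contra hyS
      have := hS x hx y hyS
      rw [Fin.lt_def] at this
      omega
    have hc := Finset.card_le_card hsub
    rw [card_val_lt (by omega : (x : ℕ) + 1 ≤ n)] at hc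
    omega
  · intro hx
    by_contra hxS
    have hsub : S ⊆ Finset.univ.filter fun y : Fin n => (y : ℕ) < (x : ℕ) := by
      intro s hs
      simp only [Finset.mem_filter, Finset.mem_univ, true_and]
      exact hS s hs x hxS
    have hc := Finset.card_le_card hsub
    rw [card_val_lt (le_of_lt x.2)] at hc
    omega

lemma wi_eq (w : Fin n → A ⊕ₗ B) (i : Fin n) : w i = toLex (ofLex (w i)) := rfl

lemma left_lt_right (σ : Equiv.Perm (Fin n)) {w : Fin n → A ⊕ₗ B} (hw : IsStd w σ⁻¹)
    {i j : Fin n} (hi : (ofLex (w i)).isLeft) (hj : ¬ (ofLex (w j)).isLeft) :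
    σ⁻¹ i < σ⁻¹ j := by
  have hij : i ≠ j := fun h => hj (h ▸ hi)
  obtain ⟨a, ha⟩ : ∃ a, ofLex (w i) = Sum.inl a := by
    rcases h : ofLex (w i) with a | b
    · exact ⟨a, rfl⟩
    · rw [h] at hi; simp at hi
  obtain ⟨b, hb⟩ : ∃ b, ofLex (w j) = Sum.inr b := by
    rcases h : ofLex (w j) with a | b
    · rw [h] at hj; simp at hj
    · exact ⟨b, rfl⟩
  have ewi : w i = toLex (Sum.inl a) := by rw [wi_eq w i, ha]
  have ewj : w j = toLex (Sum.inr b) := by rw [wi_eq w j, hb]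
  rcases lt_or_gt_of_ne hij with h | h
  · exact (hw i j h).2 (by rw [ewi, ewj]; exact Sum.Lex.inl_le_inr a b)
  · have h1 : ¬ (σ⁻¹ j < σ⁻¹ i) := fun hc => Sum.Lex.not_inr_le_inl
      (by rw [← ewi, ← ewj]; exact (hw j i h).1 hc)
    have h2 : σ⁻¹ i ≠ σ⁻¹ j := fun hc => hij (σ⁻¹.injective hc)
    rcases lt_or_gt_of_ne h2 with hlt | hgt
    · exact hlt
    · exact absurd hgt h1

lemma leftSet_eq (σ : Equiv.Perm (Fin n)) {w : Fin n → A ⊕ₗ B} (hw : IsStd w σ⁻¹) :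
    leftSet w = Pk σ (kOf w) := by
  classical
  set S' : Finset (Fin n) := (leftSet w).image (⇑σ⁻¹) with hS'def
  have hmemS' : ∀ i : Fin n, σ⁻¹ i ∈ S' ↔ i ∈ leftSet w := by
    intro i
    simp only [hS'def, Finset.mem_image]
    constructor
    · rintro ⟨j, hj, hji⟩
      rwa [← σ⁻¹.injective hji]
    · intro h; exact ⟨i, h, rfl⟩
  have hS' : ∀ x ∈ S', ∀ y, y ∉ S' → x < y := by
    intro x hx y hy
    obtain ⟨i, hi, rfl⟩ := Finset.mem_image.1 hx
    have hyi : σ y ∉ leftSet w := by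
      intro h
      exact hy (by rw [show y = σ⁻¹ (σ y) by simp]; exact (hmemS' (σ y)).2 h)
    have hi' : (ofLex (w i)).isLeft := by simpa [leftSet] using hi
    have hyi' : ¬ (ofLex (w (σ y))).isLeft := by simpa [leftSet] using hyi
    have := left_lt_right σ hw hi' hyi'
    simpa using this
  have hcard : S'.card = kOf w := Finset.card_image_of_injective _ σ⁻¹.injective
  ext i
  rw [mem_Pk, ← hcard, ← mem_iff_lt_card S' hS' (σ⁻¹ i), hmemS' i]

lemma rightSet_eq (σ : Equiv.Perm (Fin n)) {w : Fin n → A ⊕ₗ B} (hw : IsStd w σ⁻¹) :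
    (Finset.univ.filter fun i => ¬ (ofLex (w i)).isLeft) = Qk σ (kOf w) := by
  have h := leftSet_eq σ hw
  ext i
  have : (i ∈ leftSet w) ↔ (i ∈ Pk σ (kOf w)) := by rw [h]
  simp only [leftSet, Finset.mem_filter, Finset.mem_univ, true_and] at this
  simp only [Finset.mem_filter, Finset.mem_univ, true_and, mem_Qk]
  rw [this, mem_Pk]


variable (σ : Equiv.Perm (Fin n))

def wOf {k : ℕ} (hk : k ≤ n) (u : Fin k → A) (v : Fin (n - k) → B) : Fin n → A ⊕ₗ B :=
  fun i => if h : ((σ⁻¹ i : Fin n) : ℕ) < k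
    then toLex (Sum.inl (u ((qI σ hk).symm ⟨i, mem_Pk.2 h⟩)))
    else toLex (Sum.inr (v ((rI σ hk).symm ⟨i, mem_Qk.2 h⟩)))

lemma wOf_apply_mem {k : ℕ} (hk : k ≤ n) (u : Fin k → A) (v : Fin (n - k) → B)
    {i : Fin n} (h : i ∈ Pk σ k) :
    wOf σ hk u v i = toLex (Sum.inl (u ((qI σ hk).symm ⟨i, h⟩))) := by
  unfold wOf
  rw [dif_pos (mem_Pk.1 h)]

lemma wOf_apply_not_mem {k : ℕ} (hk : k ≤ n) (u : Fin k → A) (v : Fin (n - k) → B)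
    {i : Fin n} (h : i ∈ Qk σ k) :
    wOf σ hk u v i = toLex (Sum.inr (v ((rI σ hk).symm ⟨i, h⟩))) := by
  unfold wOf
  rw [dif_neg (mem_Qk.1 h)]

lemma isLeft_wOf {k : ℕ} (hk : k ≤ n) (u : Fin k → A) (v : Fin (n - k) → B) (i : Fin n) :
    (ofLex (wOf σ hk u v i)).isLeft ↔ ((σ⁻¹ i : Fin n) : ℕ) < k := by
  unfold wOf
  split
  · next h => simpa using h
  · next h => simpa using h

lemma leftSet_wOf {k : ℕ} (hk : k ≤ n) (u : Fin k → A) (v : Fin (n - k) → B) :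
    leftSet (wOf σ hk u v) = Pk σ k := by
  ext i
  simp only [leftSet, Finset.mem_filter, Finset.mem_univ, true_and, mem_Pk]
  rw [isLeft_wOf]

lemma kOf_wOf {k : ℕ} (hk : k ≤ n) (u : Fin k → A) (v : Fin (n - k) → B) :
    kOf (wOf σ hk u v) = k := by
  rw [kOf, leftSet_wOf, card_Pk σ hk]

lemma qE_qI_symm {k : ℕ} (hk : k ≤ n) (x : (Pk σ k : Finset (Fin n))) :
    qE σ hk ((qI σ hk).symm x) = (x : Fin n) := by
  rw [← qI_coe]
  simp

lemma rE_rI_symm {k : ℕ} (hk : k ≤ n) (x : (Qk σ k : Finset (Fin n))) :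
    rE σ hk ((rI σ hk).symm x) = (x : Fin n) := by
  rw [← rI_coe]
  simp

lemma wOf_qE {k : ℕ} (hk : k ≤ n) (u : Fin k → A) (v : Fin (n - k) → B) (c : Fin k) :
    wOf σ hk u v (qE σ hk c) = toLex (Sum.inl (u c)) := by
  rw [wOf_apply_mem σ hk u v (qE_mem σ hk c)]
  congr 1
  have : (⟨qE σ hk c, qE_mem σ hk c⟩ : (Pk σ k : Finset (Fin n))) = qI σ hk c :=
    Subtype.ext (qI_coe σ hk c).symm
  rw [this]
  simp

lemma wOf_rE {k : ℕ} (hk : k ≤ n) (u : Fin k → A) (v : Fin (n - k) → B) (c : Fin (n - k)) :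
    wOf σ hk u v (rE σ hk c) = toLex (Sum.inr (v c)) := by
  rw [wOf_apply_not_mem σ hk u v (rE_mem σ hk c)]
  congr 1
  have : (⟨rE σ hk c, rE_mem σ hk c⟩ : (Qk σ k : Finset (Fin n))) = rI σ hk c :=
    Subtype.ext (rI_coe σ hk c).symm
  rw [this]
  simp

lemma EP_symm_qI {k : ℕ} (hk : k ≤ n) (x : (Pk σ k : Finset (Fin n))) :
    ((EP σ hk ((qI σ hk).symm x) : Fin k) : ℕ) = ((σ⁻¹ (x : Fin n) : Fin n) : ℕ) := by
  show ((PkEquiv σ hk (qI σ hk ((qI σ hk).symm x))) : ℕ) = _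
  rw [OrderIso.apply_symm_apply]
  rfl

lemma FP_symm_rI {k : ℕ} (hk : k ≤ n) (x : (Qk σ k : Finset (Fin n))) :
    ((FP σ hk ((rI σ hk).symm x) : Fin (n - k)) : ℕ) = ((σ⁻¹ (x : Fin n) : Fin n) : ℕ) - k := by
  show ((QkEquiv σ hk (rI σ hk ((rI σ hk).symm x))) : ℕ) = _
  rw [OrderIso.apply_symm_apply]
  rfl

lemma std_wOf {k : ℕ} (hk : k ≤ n) {u : Fin k → A} {v : Fin (n - k) → B}
    (hu : IsStd u (EP σ hk)) (hv : IsStd v (FP σ hk)) :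
    IsStd (wOf σ hk u v) σ⁻¹ := by
  intro i j hij
  by_cases h1 : ((σ⁻¹ i : Fin n) : ℕ) < k <;> by_cases h2 : ((σ⁻¹ j : Fin n) : ℕ) < k
  · rw [wOf_apply_mem σ hk u v (mem_Pk.2 h1), wOf_apply_mem σ hk u v (mem_Pk.2 h2),
      Sum.Lex.inl_le_inl_iff]
    have hcd : (qI σ hk).symm ⟨i, mem_Pk.2 h1⟩ < (qI σ hk).symm ⟨j, mem_Pk.2 h2⟩ :=
      (qI σ hk).symm.lt_iff_lt.2 (Subtype.mk_lt_mk.2 hij)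
    have h := hu _ _ hcd
    rw [Fin.lt_def, EP_symm_qI, EP_symm_qI] at h
    rw [Fin.lt_def]
    exact h
  · rw [wOf_apply_mem σ hk u v (mem_Pk.2 h1), wOf_apply_not_mem σ hk u v (mem_Qk.2 h2)]
    refine iff_of_true ?_ (Sum.Lex.inl_le_inr _ _)
    rw [Fin.lt_def]
    omega
  · rw [wOf_apply_not_mem σ hk u v (mem_Qk.2 h1), wOf_apply_mem σ hk u v (mem_Pk.2 h2)]
    refine iff_of_false ?_ Sum.Lex.not_inr_le_inl
    rw [Fin.lt_def]
    omega
  · rw [wOf_apply_not_mem σ hk u v (mem_Qk.2 h1), wOf_apply_not_mem σ hk u v (mem_Qk.2 h2),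
      Sum.Lex.inr_le_inr_iff]
    have hcd : (rI σ hk).symm ⟨i, mem_Qk.2 h1⟩ < (rI σ hk).symm ⟨j, mem_Qk.2 h2⟩ :=
      (rI σ hk).symm.lt_iff_lt.2 (Subtype.mk_lt_mk.2 hij)
    have h := hv _ _ hcd
    rw [Fin.lt_def, FP_symm_rI, FP_symm_rI] at h
    rw [Fin.lt_def]
    rw [show (((σ⁻¹ i : Fin n) : ℕ) < ((σ⁻¹ j : Fin n) : ℕ)) ↔
      (((σ⁻¹ i : Fin n) : ℕ) - k < ((σ⁻¹ j : Fin n) : ℕ) - k) from by omega]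
    exact h

def uOf (w : Fin n → A ⊕ₗ B) (hl : leftSet w = Pk σ (kOf w)) : Fin (kOf w) → A :=
  fun c => (ofLex (w (qE σ (kOf_le w) c))).getLeft (by
    have h := qE_mem σ (kOf_le w) c
    rw [← hl] at h
    simpa [leftSet] using h)

def vOf (w : Fin n → A ⊕ₗ B)
    (hr : (Finset.univ.filter fun i => ¬ (ofLex (w i)).isLeft) = Qk σ (kOf w)) :
    Fin (n - kOf w) → B :=
  fun c => (ofLex (w (rE σ (kOf_le w) c))).getRight (by
    have h := rE_mem σ (kOf_le w) c
    rw [← hr] at h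
    simp only [Finset.mem_filter, Finset.mem_univ, true_and] at h
    exact Sum.not_isLeft.1 h)

lemma w_qE_eq (w : Fin n → A ⊕ₗ B) (hl : leftSet w = Pk σ (kOf w)) (c : Fin (kOf w)) :
    w (qE σ (kOf_le w) c) = toLex (Sum.inl (uOf σ w hl c)) := by
  rw [wi_eq w (qE σ (kOf_le w) c)]
  exact congrArg toLex (Sum.inl_getLeft _ _).symm

lemma w_rE_eq (w : Fin n → A ⊕ₗ B)
    (hr : (Finset.univ.filter fun i => ¬ (ofLex (w i)).isLeft) = Qk σ (kOf w))
    (c : Fin (n - kOf w)) :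
    w (rE σ (kOf_le w) c) = toLex (Sum.inr (vOf σ w hr c)) := by
  rw [wi_eq w (rE σ (kOf_le w) c)]
  exact congrArg toLex (Sum.inr_getRight _ _).symm

lemma std_uOf {w : Fin n → A ⊕ₗ B} (hw : IsStd w σ⁻¹) (hl : leftSet w = Pk σ (kOf w)) :
    IsStd (uOf σ w hl) (EP σ (kOf_le w)) := by
  intro c d hcd
  rw [EP_lt_iff]
  have h := hw _ _ ((qE σ (kOf_le w)).strictMono hcd)
  rw [w_qE_eq σ w hl c, w_qE_eq σ w hl d, Sum.Lex.inl_le_inl_iff] at h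
  exact h

lemma std_vOf {w : Fin n → A ⊕ₗ B} (hw : IsStd w σ⁻¹)
    (hr : (Finset.univ.filter fun i => ¬ (ofLex (w i)).isLeft) = Qk σ (kOf w)) :
    IsStd (vOf σ w hr) (FP σ (kOf_le w)) := by
  intro c d hcd
  rw [FP_lt_iff]
  have h := hw _ _ ((rE σ (kOf_le w)).strictMono hcd)
  rw [w_rE_eq σ w hr c, w_rE_eq σ w hr d, Sum.Lex.inr_le_inr_iff] at h
  exact h

lemma wOf_roundtrip {w : Fin n → A ⊕ₗ B} (hl : leftSet w = Pk σ (kOf w))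
    (hr : (Finset.univ.filter fun i => ¬ (ofLex (w i)).isLeft) = Qk σ (kOf w)) :
    wOf σ (kOf_le w) (uOf σ w hl) (vOf σ w hr) = w := by
  funext i
  by_cases h : ((σ⁻¹ i : Fin n) : ℕ) < kOf w
  · rw [wOf_apply_mem σ (kOf_le w) _ _ (mem_Pk.2 h)]
    rw [← w_qE_eq σ w hl ((qI σ (kOf_le w)).symm ⟨i, mem_Pk.2 h⟩)]
    rw [qE_qI_symm]
  · rw [wOf_apply_not_mem σ (kOf_le w) _ _ (mem_Qk.2 h)]
    rw [← w_rE_eq σ w hr ((rI σ (kOf_le w)).symm ⟨i, mem_Qk.2 h⟩)]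
    rw [rE_rI_symm]

lemma qE_congr {k k' : ℕ} (hkk : k = k') (hk : k ≤ n) (hk' : k' ≤ n) (c : Fin k) :
    qE σ hk c = qE σ hk' ⟨(c : ℕ), hkk ▸ c.2⟩ := by
  subst hkk
  rfl

lemma rE_congr {k k' : ℕ} (hkk : k = k') (hk : k ≤ n) (hk' : k' ≤ n) (c : Fin (n - k)) :
    rE σ hk c = rE σ hk' ⟨(c : ℕ), hkk ▸ c.2⟩ := by
  subst hkk
  rfl

lemma uOf_wOf {k : ℕ} (hk : k ≤ n) (u : Fin k → A) (v : Fin (n - k) → B)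
    (hl : leftSet (wOf σ hk u v) = Pk σ (kOf (wOf σ hk u v)))
    (c : Fin (kOf (wOf σ hk u v))) :
    uOf σ (wOf σ hk u v) hl c = u ⟨(c : ℕ), by have h := kOf_wOf σ hk u v; have h2 := c.2; omega⟩ := by
  apply (Sum.getLeft_eq_iff _).2
  show ofLex (wOf σ hk u v (qE σ (kOf_le (wOf σ hk u v)) c)) = _
  rw [qE_congr σ (kOf_wOf σ hk u v) (kOf_le _) hk c, wOf_qE]
  rfl

lemma vOf_wOf {k : ℕ} (hk : k ≤ n) (u : Fin k → A) (v : Fin (n - k) → B)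
    (hr : (Finset.univ.filter fun i => ¬ (ofLex ((wOf σ hk u v) i)).isLeft)
      = Qk σ (kOf (wOf σ hk u v)))
    (c : Fin (n - kOf (wOf σ hk u v))) :
    vOf σ (wOf σ hk u v) hr c
      = v ⟨(c : ℕ), by have h := kOf_wOf σ hk u v; have := c.2; omega⟩ := by
  apply (Sum.getRight_eq_iff _).2
  show ofLex (wOf σ hk u v (rE σ (kOf_le (wOf σ hk u v)) c)) = _
  rw [rE_congr σ (kOf_wOf σ hk u v) (kOf_le _) hk c, wOf_rE]
  rfl

end Core

lemma sigma_mk_eq {n : ℕ} {A B : Type*} (k k' : Fin (n + 1)) (h : (k : ℕ) = (k' : ℕ))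
    (u : Fin (k : ℕ) → A) (u' : Fin (k' : ℕ) → A)
    (v : Fin (n - (k : ℕ)) → B) (v' : Fin (n - (k' : ℕ)) → B)
    (hu : ∀ i : Fin (k : ℕ), u i = u' ⟨(i : ℕ), by omega⟩)
    (hv : ∀ i : Fin (n - (k : ℕ)), v i = v' ⟨(i : ℕ), by omega⟩) :
    (⟨k, (u, v)⟩ : Σ k : Fin (n + 1), (Fin (k : ℕ) → A) × (Fin (n - (k : ℕ)) → B))
      = ⟨k', (u', v')⟩ := by
  have hk : k = k' := Fin.ext h
  subst hk
  have hu' : u = u' := funext fun i => hu i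
  have hv' : v = v' := funext fun i => hv i
  rw [hu', hv']

lemma rhs_sigma {A B : Type*} [LinearOrder A] [LinearOrder B] {n : ℕ}
    (SA : (k : Fin (n + 1)) → Finset (Fin (k : ℕ) → A))
    (SB : (k : Fin (n + 1)) → Finset (Fin (n - (k : ℕ)) → B)) :
    ∑ x ∈ Finset.univ.sigma (fun k => (SA k) ×ˢ (SB k)),
        (wordAlg x.2.1) ⊗ₜ[ℚ] (wordAlg x.2.2)
      = ∑ k : Fin (n + 1), (∑ u ∈ SA k, wordAlg u) ⊗ₜ[ℚ] (∑ v ∈ SB k, wordAlg v) := by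
  rw [Finset.sum_sigma]
  refine Finset.sum_congr rfl fun k _ => ?_
  rw [Finset.sum_product, TensorProduct.sum_tmul]
  refine Finset.sum_congr rfl fun u _ => ?_
  show ∑ v ∈ SB k, (wordAlg u) ⊗ₜ[ℚ] (wordAlg v) = _
  exact (TensorProduct.tmul_sum _ _ _).symm

/-- coproduct formula for `FQSym`. With `A ⊕ₗ B` ordered so that all of
`A` is smaller than all of `B`, for every `σ ∈ Sₙ`,
`π(F_σ(A ⊕ B)) = Σ_{k=0}^n F_{Std(σ(1)⋯σ(k))}(A) ⊗ F_{Std(σ(k+1)⋯σ(n))}(B)`. -/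
theorem coproduct_freeQuasiRibbon (A B : Type*) [LinearOrder A] [LinearOrder B]
    [Fintype A] [Fintype B] {n : ℕ} (σ : Equiv.Perm (Fin n)) :
    piHom A B (FQR (A ⊕ₗ B) σ) =
      ∑ k : Fin (n + 1),
        (FQR A (std (fun i : Fin (k : ℕ) => σ ⟨(i : ℕ), by omega⟩))) ⊗ₜ[ℚ]
        (FQR B (std (fun i : Fin (n - (k : ℕ)) => σ ⟨(k : ℕ) + (i : ℕ), by omega⟩))) := by
  classical
  simp only [FQR]
  rw [← rhs_sigma
    (fun k : Fin (n + 1) => Finset.univ.filter (fun u : Fin (k : ℕ) → A =>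
      std u = (std (fun i : Fin (k : ℕ) => σ ⟨(i : ℕ), by omega⟩))⁻¹))
    (fun k : Fin (n + 1) => Finset.univ.filter (fun v : Fin (n - (k : ℕ)) → B =>
      std v = (std (fun i : Fin (n - (k : ℕ)) => σ ⟨(k : ℕ) + (i : ℕ), by omega⟩))⁻¹))]
  rw [map_sum]
  refine Finset.sum_bij'
    (i := fun w hw => ⟨⟨kOf w, Nat.lt_succ_of_le (kOf_le w)⟩,
      (uOf σ w (leftSet_eq σ (std_eq_iff.1 (Finset.mem_filter.1 hw).2)),
       vOf σ w (rightSet_eq σ (std_eq_iff.1 (Finset.mem_filter.1 hw).2)))⟩)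
    (j := fun x hx => wOf σ (Nat.lt_succ_iff.1 x.1.2) x.2.1 x.2.2)
    ?_ ?_ ?_ ?_ ?_
  · -- hi : forward maps into the sigma finset
    intro w hw
    have hw' : IsStd w σ⁻¹ := std_eq_iff.1 (Finset.mem_filter.1 hw).2
    rw [Finset.mem_sigma]
    refine ⟨Finset.mem_univ _, ?_⟩
    rw [Finset.mem_product]
    constructor
    · rw [Finset.mem_filter]
      refine ⟨Finset.mem_univ _, ?_⟩
      exact (std_eq_iff.2 (std_uOf σ hw'
        (leftSet_eq σ (std_eq_iff.1 (Finset.mem_filter.1 hw).2)))).trans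
        (stdPrefix σ (kOf_le w)).symm
    · rw [Finset.mem_filter]
      refine ⟨Finset.mem_univ _, ?_⟩
      exact (std_eq_iff.2 (std_vOf σ hw'
        (rightSet_eq σ (std_eq_iff.1 (Finset.mem_filter.1 hw).2)))).trans
        (stdSuffix σ (kOf_le w)).symm
  · -- hj : backward maps into the filter
    rintro ⟨k, u, v⟩ hx
    rw [Finset.mem_sigma, Finset.mem_product, Finset.mem_filter, Finset.mem_filter] at hx
    obtain ⟨-, ⟨-, hu⟩, ⟨-, hv⟩⟩ := hx
    rw [Finset.mem_filter]
    refine ⟨Finset.mem_univ _, ?_⟩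
    apply std_eq_iff.2
    apply std_wOf σ (Nat.lt_succ_iff.1 k.2)
    · exact std_eq_iff.1 (hu.trans (stdPrefix σ (Nat.lt_succ_iff.1 k.2)))
    · exact std_eq_iff.1 (hv.trans (stdSuffix σ (Nat.lt_succ_iff.1 k.2)))
  · -- left_inv
    intro w hw
    exact wOf_roundtrip σ (leftSet_eq σ (std_eq_iff.1 (Finset.mem_filter.1 hw).2))
      (rightSet_eq σ (std_eq_iff.1 (Finset.mem_filter.1 hw).2))
  · -- right_inv
    rintro ⟨k, u, v⟩ hx
    refine sigma_mk_eq _ k ?_ _ u _ v ?_ ?_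
    · exact kOf_wOf σ (Nat.lt_succ_iff.1 k.2) u v
    · intro c
      exact uOf_wOf σ (Nat.lt_succ_iff.1 k.2) u v _ c
    · intro c
      exact vOf_wOf σ (Nat.lt_succ_iff.1 k.2) u v _ c
  · -- values
    intro w hw
    have hw' : IsStd w σ⁻¹ := std_eq_iff.1 (Finset.mem_filter.1 hw).2
    have hl := leftSet_eq σ hw'
    have hr := rightSet_eq σ hw'
    rw [wordAlg_eq_wordAlgL, piHom_wordAlgL]
    congr 1
    · refine congrArg wordAlgL (subword_ofFn w (fun x => (ofLex x).getLeft?)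
        (fun a => toLex (Sum.inl a)) ?_ ?_ (Pk σ (kOf w)) (card_Pk σ (kOf_le w)) ?_
        (uOf σ w hl) ?_)
      · intro a b hab
        exact Sum.inl_injective (congrArg ofLex hab)
      · intro c
        rcases h : ofLex c with a | b
        · have : c = toLex (Sum.inl a) := by rw [wi_eq (fun _ : Fin 1 => c) 0, h]
          rw [this]
          simp
        · have : c = toLex (Sum.inr b) := by rw [wi_eq (fun _ : Fin 1 => c) 0, h]
          rw [this]
          simp
      · intro i
        rw [← hl]
        simp [leftSet]
      · intro c
        exact (w_qE_eq σ w hl c).symm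
    · refine congrArg wordAlgL (subword_ofFn w (fun x => (ofLex x).getRight?)
        (fun b => toLex (Sum.inr b)) ?_ ?_ (Qk σ (kOf w)) (card_Qk σ (kOf_le w)) ?_
        (vOf σ w hr) ?_)
      · intro a b hab
        exact Sum.inr_injective (congrArg ofLex hab)
      · intro c
        rcases h : ofLex c with a | b
        · have : c = toLex (Sum.inl a) := by rw [wi_eq (fun _ : Fin 1 => c) 0, h]
          rw [this]
          simp
        · have : c = toLex (Sum.inr b) := by rw [wi_eq (fun _ : Fin 1 => c) 0, h]
          rw [this]
          simp
      · intro i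
        rw [← hr]
        simp [Sum.not_isLeft]
      · intro c
        exact (w_rE_eq σ w hr c).symm

end
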